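/- Let n ≥ 1, let i, j be integers with 1 ≤ i, j ≤ n, and let ε₁, ε₂ ∈ {1, I} ⊆ ℂ, where I is the imaginary unit. Let ρ > 0 and let a, b, c : {z ∈ ℂ : |z| < ρ} → ℂ be holomorphic. Define, on the punctured disc 0 < |z| < ρ, f(z) = ε₁ z^{−i} + a(z), g(z) = ε₂ z^{−j} + b(z), E(z) = z^{−n} + c(z). Let 0 < r < ρ be such that E'(z) ≠ 0 for all z with 0 < |z| ≤ r. Then Re( −(2πI)^{−1} ∮_{|z|=r} f'(z)·g'(z)/(I·E'(z)) dz ) equals i·j/n if i + j = n and ε₁·ε₂ = I, and equals 0 otherwise. Here ∮_{|z|=r} denotes the circle integral over the circle of radius r centered at 0 and ' denotes the complex derivative. -/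

import Mathlib

open scoped Classical

lemma rnfp_zpow_inv (z : ℂ) (m : ℕ) : z ^ (-(m:ℤ)-1) = (z^(m+1))⁻¹ := by
  rw [show -(m:ℤ)-1 = -((m+1 : ℕ):ℤ) by push_cast; ring, zpow_neg, zpow_natCast]

lemma rnfp_key2 (iC jC nC e1 e2 A B C z P Q φ : ℂ) (hz : z ≠ 0) (hP : P ≠ 0) (hQ : Q ≠ 0)
    (hφ : φ ≠ 0) (hphi : φ = -nC + (P * Q / z) * C) :
    (e1 * -iC * P⁻¹ + A) * (e2 * -jC * Q⁻¹ + B) / (Complex.I * (-nC * (P * Q / z)⁻¹ + C))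
      = z⁻¹ * (Complex.I⁻¹ * ((-(iC * e1) + P * A) * (-(jC * e2) + Q * B)) / φ) := by
  have hI := Complex.I_ne_zero
  have hd : -nC * (P * Q / z)⁻¹ + C = (z / (P * Q)) * φ := by
    rw [hphi]; field_simp
  rw [hd, Complex.inv_I]
  field_simp
  ring_nf
  simp [Complex.I_sq]
  ring

lemma rnfp_key13 (iC jC nC e1 e2 A B C W P Q φ : ℂ) (hW : W ≠ 0) (hP : P ≠ 0) (hQ : Q ≠ 0)
    (hn : nC ≠ 0) (hφ : φ ≠ 0) (hphi : φ = -nC + W * P * Q * C) :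
    (e1 * -iC * P⁻¹ + A) * (e2 * -jC * Q⁻¹ + B) / (Complex.I * (-nC * (W * P * Q)⁻¹ + C))
      = Complex.I⁻¹ * (iC * jC * e1 * e2 / -nC) * W
        + Complex.I⁻¹ * (nC * iC * e1 * (W * Q) * B + nC * jC * e2 * (W * P) * A
            - nC * (W * P * Q) * A * B - iC * jC * e1 * e2 * (W * W * P * Q) * C)
          / (-nC * φ) := by
  have hI := Complex.I_ne_zero
  have hd : -nC * (W * P * Q)⁻¹ + C = (W * P * Q)⁻¹ * φ := by
    rw [hphi]; field_simp
  rw [hd, Complex.inv_I]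
  field_simp
  ring_nf
  rw [hphi]
  ring_nf
  simp [Complex.I_sq]
  ring_nf

/-- the local flat-pairing computation for the reduced real-normalized
Whitham hierarchy.  Near the puncture, `f(z) = ε₁ z^{−i} + a(z)`,
`g(z) = ε₂ z^{−j} + b(z)`, `E(z) = z^{−n} + c(z)` with `a, b, c` holomorphic on
`|z| < ρ` and `ε₁, ε₂ ∈ {1, I}`; then for a circle `|z| = r` with `E' ≠ 0` on
`0 < |z| ≤ r`, the real part of `−(2πI)⁻¹ ∮ f' g' / (I E')` equals `ij/n` if
`i + j = n` and `ε₁ ε₂ = I`, and `0` otherwise. -/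
theorem real_normalized_flat_pairing (n i j : ℕ) (hn : 1 ≤ n)
    (hi1 : 1 ≤ i) (hin : i ≤ n) (hj1 : 1 ≤ j) (hjn : j ≤ n)
    (ε₁ ε₂ : ℂ) (hε₁ : ε₁ ∈ ({1, Complex.I} : Set ℂ))
    (hε₂ : ε₂ ∈ ({1, Complex.I} : Set ℂ))
    (ρ : ℝ) (hρ : 0 < ρ)
    (a b c : ℂ → ℂ)
    (ha : DifferentiableOn ℂ a (Metric.ball (0 : ℂ) ρ))
    (hb : DifferentiableOn ℂ b (Metric.ball (0 : ℂ) ρ))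
    (hc : DifferentiableOn ℂ c (Metric.ball (0 : ℂ) ρ))
    (f g E : ℂ → ℂ)
    (hf : ∀ z : ℂ, z ≠ 0 → ‖z‖ < ρ → f z = ε₁ * z ^ (-(i : ℤ)) + a z)
    (hg : ∀ z : ℂ, z ≠ 0 → ‖z‖ < ρ → g z = ε₂ * z ^ (-(j : ℤ)) + b z)
    (hE : ∀ z : ℂ, z ≠ 0 → ‖z‖ < ρ → E z = z ^ (-(n : ℤ)) + c z)
    (r : ℝ) (hr0 : 0 < r) (hrρ : r < ρ)
    (hE' : ∀ z : ℂ, z ≠ 0 → ‖z‖ ≤ r → deriv E z ≠ 0) :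
    (-(2 * Real.pi * Complex.I)⁻¹ *
        (∮ z in C(0, r), deriv f z * deriv g z / (Complex.I * deriv E z))).re
      = if i + j = n ∧ ε₁ * ε₂ = Complex.I then (i * j : ℝ) / n else 0 := by
  have hnC : (n:ℂ) ≠ 0 := Nat.cast_ne_zero.mpr (by omega)
  have hI := Complex.I_ne_zero
  -- derivatives of a, b, c are differentiable on the ball
  have hA' : DifferentiableOn ℂ (deriv a) (Metric.ball (0:ℂ) ρ) :=
    ((ha.analyticOnNhd Metric.isOpen_ball).deriv).differentiableOn
  have hB' : DifferentiableOn ℂ (deriv b) (Metric.ball (0:ℂ) ρ) :=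
    ((hb.analyticOnNhd Metric.isOpen_ball).deriv).differentiableOn
  have hC' : DifferentiableOn ℂ (deriv c) (Metric.ball (0:ℂ) ρ) :=
    ((hc.analyticOnNhd Metric.isOpen_ball).deriv).differentiableOn
  -- the function φ
  set φ : ℂ → ℂ := fun z => -(n:ℂ) + z^(n+1) * deriv c z with hφdef
  have hφdiff : DifferentiableOn ℂ φ (Metric.ball (0:ℂ) ρ) :=
    (differentiableOn_const _).add ((differentiable_pow _).differentiableOn.mul hC')
  -- derivative formulas
  have derivformula : ∀ (m : ℕ) (e : ℂ) (u F : ℂ → ℂ),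
      DifferentiableOn ℂ u (Metric.ball (0:ℂ) ρ) →
      (∀ z : ℂ, z ≠ 0 → ‖z‖ < ρ → F z = e * z ^ (-(m : ℤ)) + u z) →
      ∀ z : ℂ, z ≠ 0 → ‖z‖ < ρ →
        deriv F z = e * -(m:ℂ) * z ^ (-(m:ℤ) - 1) + deriv u z := by
    intro m e u F hu hF z hz hzρ
    have hball : z ∈ Metric.ball (0:ℂ) ρ := by
      simpa [Metric.mem_ball, Complex.dist_eq] using hzρ
    have hmem : (Metric.ball (0:ℂ) ρ ∩ {(0:ℂ)}ᶜ) ∈ nhds z :=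
      (Metric.isOpen_ball.inter isOpen_compl_singleton).mem_nhds ⟨hball, hz⟩
    have heq : F =ᶠ[nhds z] fun w => e * w ^ (-(m:ℤ)) + u w := by
      filter_upwards [hmem] with w hw
      exact hF w hw.2 (by simpa [Metric.mem_ball, Complex.dist_eq] using hw.1)
    rw [heq.deriv_eq]
    have h1 : DifferentiableAt ℂ (fun w : ℂ => w ^ (-(m:ℤ))) z :=
      differentiableAt_zpow.mpr (Or.inl hz)
    have h2 : DifferentiableAt ℂ u z := hu.differentiableAt (Metric.isOpen_ball.mem_nhds hball)
    rw [deriv_fun_add (h1.const_mul _) h2, deriv_const_mul _ h1, deriv_zpow]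
    push_cast; ring
  have hdf := derivformula i ε₁ a f ha hf
  have hdg := derivformula j ε₂ b g hb hg
  have hdE := derivformula n 1 c E hc (fun z hz hzρ => by rw [hE z hz hzρ]; ring)
  -- φ is nonvanishing on the closed ball of radius r
  have hφne : ∀ z ∈ Metric.closedBall (0:ℂ) r, φ z ≠ 0 := by
    intro z hzball
    have hzr : ‖z‖ ≤ r := by
      simpa [Metric.mem_closedBall, Complex.dist_eq] using hzball
    rcases eq_or_ne z 0 with rfl | hz
    · simp [hφdef, zero_pow (Nat.succ_ne_zero n), hnC]
    · have hzρ' : ‖z‖ < ρ := lt_of_le_of_lt hzr hrρ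
      have h1 : φ z = z^(n+1) * deriv E z := by
        rw [hdE z hz hzρ', hφdef]
        have h2 : (z:ℂ)^(n+1) * z ^ (-(n:ℤ)-1) = 1 := by
          rw [rnfp_zpow_inv]
          exact mul_inv_cancel₀ (pow_ne_zero _ hz)
        simp only [mul_add]
        rw [show (z:ℂ)^(n+1) * (1 * -(n:ℂ) * z ^ (-(n:ℤ) - 1)) 
            = -(n:ℂ) * ((z:ℂ)^(n+1) * z ^ (-(n:ℤ)-1)) by ring, h2]
        ring
      rw [h1]
      exact mul_ne_zero (pow_ne_zero _ hz) (hE' z hz hzr)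
  -- the open set S
  set S : Set ℂ := Metric.ball (0:ℂ) ρ ∩ φ ⁻¹' {(0:ℂ)}ᶜ with hSdef
  have hSopen : IsOpen S :=
    hφdiff.continuousOn.isOpen_inter_preimage Metric.isOpen_ball isOpen_compl_singleton
  have hSsub : S ⊆ Metric.ball (0:ℂ) ρ := Set.inter_subset_left
  have hsub : Metric.closedBall (0:ℂ) r ⊆ S := by
    intro z hz
    refine ⟨?_, hφne z hz⟩
    have : dist z 0 ≤ r := hz
    exact Metric.mem_ball.mpr (lt_of_le_of_lt this hrρ)
  have hφS : ∀ z ∈ S, φ z ≠ 0 := fun z hz => hz.2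
  have hsphere_facts : ∀ z ∈ Metric.sphere (0:ℂ) r, z ≠ 0 ∧ ‖z‖ < ρ ∧ φ z ≠ 0 := by
    intro z hzs
    have hzr : ‖z‖ = r := by simpa [Complex.dist_eq] using hzs
    have hz : z ≠ 0 := by
      intro h; rw [h] at hzr; simp at hzr; exact absurd hzr.symm (ne_of_gt hr0)
    exact ⟨hz, by rw [hzr]; exact hrρ, hφne z (Metric.sphere_subset_closedBall hzs)⟩
  by_cases hij : i + j = n
  · -- the case i + j = n
    set H : ℂ → ℂ := fun z => Complex.I⁻¹ *
        ((-(↑i * ε₁) + z^(i+1) * deriv a z) * (-(↑j * ε₂) + z^(j+1) * deriv b z)) / φ z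
      with hHdef
    have hHdiff : DifferentiableOn ℂ H S := by
      apply DifferentiableOn.div
      · exact (differentiableOn_const _).mul
          (((differentiableOn_const _).add
              ((differentiable_pow _).differentiableOn.mul (hA'.mono hSsub))).mul
            ((differentiableOn_const _).add
              ((differentiable_pow _).differentiableOn.mul (hB'.mono hSsub))))
      · exact hφdiff.mono hSsub
      · exact hφS
    have hkey : Set.EqOn (fun z => deriv f z * deriv g z / (Complex.I * deriv E z))
        (fun z => (z - 0)⁻¹ • H z) (Metric.sphere (0:ℂ) r) := by
      intro z hzs
      obtain ⟨hz, hzρ', hφz⟩ := hsphere_facts z hzs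
      have hP : (z:ℂ)^(i+1) ≠ 0 := pow_ne_zero _ hz
      have hQ : (z:ℂ)^(j+1) ≠ 0 := pow_ne_zero _ hz
      have hzn1 : (z:ℂ)^(n+1) = z^(i+1) * z^(j+1) / z := by
        rw [eq_div_iff hz, ← pow_succ, ← pow_add]; congr 1; omega
      simp only [hHdef, hφdef] at hφz ⊢
      rw [hzn1] at hφz
      rw [hdf z hz hzρ', hdg z hz hzρ', hdE z hz hzρ', one_mul,
        rnfp_zpow_inv z i, rnfp_zpow_inv z j, rnfp_zpow_inv z n, sub_zero, smul_eq_mul, hzn1]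
      exact rnfp_key2 i j n ε₁ ε₂ (deriv a z) (deriv b z) (deriv c z) z _ _ _ hz hP hQ hφz rfl
    have hHdc : DiffContOnCl ℂ H (Metric.ball (0:ℂ) r) :=
      DifferentiableOn.diffContOnCl
        (by rw [closure_ball (0:ℂ) hr0.ne']; exact hHdiff.mono hsub)
    have hint : (∮ z in C(0, r), deriv f z * deriv g z / (Complex.I * deriv E z))
        = (2 * (Real.pi:ℂ) * Complex.I) • H 0 := by
      rw [circleIntegral.integral_congr hr0.le hkey]
      exact hHdc.circleIntegral_sub_inv_smul (Metric.mem_ball_self hr0)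
    rw [hint, smul_eq_mul]
    have h2πI : (2 * (Real.pi:ℂ) * Complex.I) ≠ 0 := by
      simp [Real.pi_ne_zero, Complex.I_ne_zero, Complex.ofReal_ne_zero]
    rw [neg_mul, inv_mul_cancel_left₀ h2πI]
    have hval : -H 0 = (((i*j/n : ℝ)) : ℂ) * (ε₁ * ε₂) * (-Complex.I) := by
      simp only [hHdef, hφdef]
      rw [zero_pow (by omega : i+1 ≠ 0), zero_pow (by omega : j+1 ≠ 0),
        zero_pow (by omega : n+1 ≠ 0), Complex.inv_I]
      push_cast
      field_simp
      simp only [zero_mul, add_zero]; rw [div_eq_iff (neg_ne_zero.mpr hnC)]; ring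
    rw [hval]
    simp only [Set.mem_insert_iff, Set.mem_singleton_iff] at hε₁ hε₂
    have hπ := Real.pi_ne_zero
    rcases hε₁ with rfl | rfl <;> rcases hε₂ with rfl | rfl
    · rw [if_neg (by rintro ⟨-, h⟩; simpa [Complex.ext_iff] using h)]
      simp
    · rw [if_pos ⟨hij, one_mul Complex.I⟩]
      simp [Complex.I_sq]
      all_goals try (ring_nf; simp [Complex.I_sq])
    · rw [if_pos ⟨hij, mul_one Complex.I⟩]
      simp [Complex.I_sq]
      all_goals try (ring_nf; simp [Complex.I_sq])
    · rw [if_neg (by rintro ⟨-, h⟩; rw [Complex.I_mul_I] at h; simpa [Complex.ext_iff] using h)]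
      simp [Complex.I_sq]
      all_goals try (ring_nf; simp)
  · -- the case i + j ≠ n
    set k : ℤ := (i:ℤ) + j - n with hkdef
    have hk : (-1 : ℤ) - k ≠ -1 := by omega
    set Kc : ℂ := Complex.I⁻¹ * ((i:ℂ) * (j:ℂ) * ε₁ * ε₂ / -(n:ℂ)) with hKcdef
    set M : ℂ → ℂ := fun z => (n:ℂ)*(i:ℂ)*ε₁*z^(n-i)*deriv b z
        + (n:ℂ)*(j:ℂ)*ε₂*z^(n-j)*deriv a z
        - (n:ℂ)*z^(n+1)*deriv a z*deriv b z
        - (i:ℂ)*(j:ℂ)*ε₁*ε₂*z^(2*n-(i+j))*deriv c z with hMdef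
    set G : ℂ → ℂ := fun z => Complex.I⁻¹ * M z / (-(n:ℂ) * φ z) with hGdef
    have hMdiff : DifferentiableOn ℂ M S := by
      apply DifferentiableOn.sub
      apply DifferentiableOn.sub
      apply DifferentiableOn.add
      · exact ((differentiable_pow _).const_mul _).differentiableOn.mul (hB'.mono hSsub)
      · exact ((differentiable_pow _).const_mul _).differentiableOn.mul (hA'.mono hSsub)
      · exact (((differentiable_pow _).const_mul _).differentiableOn.mul
          (hA'.mono hSsub)).mul (hB'.mono hSsub)
      · exact ((differentiable_pow _).const_mul _).differentiableOn.mul (hC'.mono hSsub)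
    have hGdiff : DifferentiableOn ℂ G S := by
      apply DifferentiableOn.div (hMdiff.const_mul _) ((hφdiff.mono hSsub).const_mul _)
      exact fun z hz => mul_ne_zero (neg_ne_zero.mpr hnC) (hφS z hz)
    have hkey : Set.EqOn (fun z => deriv f z * deriv g z / (Complex.I * deriv E z))
        (fun z => Kc * z ^ ((-1 : ℤ) - k) + G z) (Metric.sphere (0:ℂ) r) := by
      intro z hzs
      obtain ⟨hz, hzρ', hφz⟩ := hsphere_facts z hzs
      have hP : (z:ℂ)^(i+1) ≠ 0 := pow_ne_zero _ hz
      have hQ : (z:ℂ)^(j+1) ≠ 0 := pow_ne_zero _ hz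
      have hW : (z:ℂ)^((-1 : ℤ)-k) ≠ 0 := zpow_ne_zero _ hz
      have e1 : (z:ℂ)^(n-i) = z^((-1:ℤ)-k) * z^(j+1) := by
        rw [← zpow_natCast z (n-i), ← zpow_natCast z (j+1), ← zpow_add₀ hz]
        congr 1; omega
      have e2 : (z:ℂ)^(n-j) = z^((-1:ℤ)-k) * z^(i+1) := by
        rw [← zpow_natCast z (n-j), ← zpow_natCast z (i+1), ← zpow_add₀ hz]
        congr 1; omega
      have e3 : (z:ℂ)^(n+1) = z^((-1:ℤ)-k) * z^(i+1) * z^(j+1) := by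
        rw [← zpow_natCast z (n+1), ← zpow_natCast z (i+1), ← zpow_natCast z (j+1),
          ← zpow_add₀ hz, ← zpow_add₀ hz]
        congr 1; omega
      have e4 : (z:ℂ)^(2*n-(i+j)) = z^((-1:ℤ)-k) * z^((-1:ℤ)-k) * z^(i+1) * z^(j+1) := by
        rw [← zpow_natCast z (2*n-(i+j)), ← zpow_natCast z (i+1), ← zpow_natCast z (j+1),
          ← zpow_add₀ hz, ← zpow_add₀ hz, ← zpow_add₀ hz]
        congr 1; omega
      simp only [hGdef, hMdef, hφdef, hKcdef] at hφz ⊢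
      rw [e3] at hφz
      rw [hdf z hz hzρ', hdg z hz hzρ', hdE z hz hzρ', one_mul,
        rnfp_zpow_inv z i, rnfp_zpow_inv z j, rnfp_zpow_inv z n, e1, e2, e3, e4]
      exact rnfp_key13 i j n ε₁ ε₂ (deriv a z) (deriv b z) (deriv c z)
        (z^((-1:ℤ)-k)) (z^(i+1)) (z^(j+1)) _ hW hP hQ hnC hφz rfl
    have hGcont : ContinuousOn G (Metric.closedBall (0:ℂ) r) := hGdiff.continuousOn.mono hsub
    have hGzero : (∮ z in C(0, r), -G z) = 0 := by
      refine Complex.circleIntegral_eq_zero_of_differentiable_on_off_countable hr0.le Set.countable_empty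
        hGcont.neg (fun z hz => ?_)
      exact (hGdiff.differentiableAt
        (hSopen.mem_nhds (hsub (Metric.ball_subset_closedBall hz.1)))).neg
    have hFcont : ContinuousOn (fun z : ℂ => Kc * z ^ ((-1:ℤ)-k)) (Metric.sphere (0:ℂ) r) := by
      refine continuousOn_const.mul (fun z hz => ?_)
      exact (continuousAt_zpow₀ z _ (Or.inl ((hsphere_facts z hz).1))).continuousWithinAt
    have hFi : CircleIntegrable (fun z : ℂ => Kc * z^((-1:ℤ)-k)) 0 r :=
      hFcont.circleIntegrable hr0.le
    have hGi : CircleIntegrable (fun z : ℂ => -G z) 0 r :=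
      ((hGcont.mono Metric.sphere_subset_closedBall).neg).circleIntegrable hr0.le
    have hFzero : (∮ z in C(0,r), Kc * z^((-1:ℤ)-k)) = 0 := by
      rw [circleIntegral.integral_const_mul]
      have h1 : (∮ z in C(0,r), z^((-1:ℤ)-k)) = ∮ z in C(0,r), (z - 0)^((-1:ℤ)-k) :=
        circleIntegral.integral_congr hr0.le (fun z _ => by rw [sub_zero])
      rw [h1, circleIntegral.integral_sub_zpow_of_ne hk, mul_zero]
    have hsplit : (∮ z in C(0, r), deriv f z * deriv g z / (Complex.I * deriv E z)) = 0 := by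
      rw [circleIntegral.integral_congr hr0.le hkey]
      have h2 : (∮ z in C(0,r), (Kc * z^((-1:ℤ)-k) + G z))
          = ∮ z in C(0,r), (Kc*z^((-1:ℤ)-k) - (-G z)) :=
        circleIntegral.integral_congr hr0.le (fun z _ => by ring)
      rw [h2, circleIntegral.integral_sub hFi hGi, hFzero, hGzero, sub_zero]
    rw [hsplit, mul_zero, Complex.zero_re]
    rw [if_neg (by rintro ⟨h, -⟩; exact hij h)]
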